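/- Let A be a symmetric (0,2)-tensor on an n-dimensional (n ≥ 4) space with metric g such that rank(A − α g) = 1 for some scalar α. Then g ∧ A² + ((n−2)/2) A ∧ A − tr(A) g ∧ A + (((tr A)² − tr(A²))/(2(n−1))) g ∧ g = 0. -/

import Mathlib

open Module

variable {V : Type*} [AddCommGroup V] [Module ℝ V]

/-- Kulkarni–Nomizu product of two (0,2)-tensors. -/
def KN (A B : V → V → ℝ) : V → V → V → V → ℝ := fun X1 X2 X3 X4 =>
  A X1 X4 * B X2 X3 + A X2 X3 * B X1 X4 - A X1 X3 * B X2 X4 - A X2 X4 * B X1 X3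

/-- The endomorphism `X ∧_A Y` applied to `Z`. -/
def wedgeEnd (A : V → V → ℝ) (X Y Z : V) : V := A Y Z • X - A X Z • Y

/-- Tachibana tensor `Q(A,T)` of a symmetric (0,2)-tensor `A` and a (0,4)-tensor `T`. -/
def Tach (A : V → V → ℝ) (T : V → V → V → V → ℝ) : V → V → V → V → V → V → ℝ :=
  fun X1 X2 X3 X4 X Y =>
    -(T (wedgeEnd A X Y X1) X2 X3 X4) - T X1 (wedgeEnd A X Y X2) X3 X4
      - T X1 X2 (wedgeEnd A X Y X3) X4 - T X1 X2 X3 (wedgeEnd A X Y X4)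

/-- if `rank (A − α g) = 1` then
`g ∧ A² + ((n−2)/2) A ∧ A − tr(A) g ∧ A + (((tr A)² − tr(A²))/(2(n−1))) g ∧ g = 0`. -/
theorem statement_9 [FiniteDimensional ℝ V] (hn : 4 ≤ finrank ℝ V)
    (g : LinearMap.BilinForm ℝ V) (hgs : ∀ X Y, g X Y = g Y X)
    (hgn : g.Nondegenerate)
    (a : V →ₗ[ℝ] V) (ha : ∀ X Y, g (a X) Y = g (a Y) X) (α : ℝ)
    (hrank : finrank ℝ (LinearMap.range (a - α • LinearMap.id)) = 1)
    (X1 X2 X3 X4 : V) :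
    KN (fun x y => g x y) (fun x y => g (a (a x)) y) X1 X2 X3 X4
      + (((finrank ℝ V : ℝ) - 2) / 2)
          * KN (fun x y => g (a x) y) (fun x y => g (a x) y) X1 X2 X3 X4
      - LinearMap.trace ℝ V a * KN (fun x y => g x y) (fun x y => g (a x) y) X1 X2 X3 X4
      + (((LinearMap.trace ℝ V a) ^ 2 - LinearMap.trace ℝ V (a ∘ₗ a))
            / (2 * ((finrank ℝ V : ℝ) - 1)))
          * KN (fun x y => g x y) (fun x y => g x y) X1 X2 X3 X4
      = 0 := by
  set B : V →ₗ[ℝ] V := a - α • LinearMap.id with hBdef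
  obtain ⟨v, hv0, hvall⟩ := (finrank_eq_one_iff' (K := ℝ) (V := LinearMap.range B)).mp hrank
  set w : V := (v : V) with hwdef
  have hw0 : w ≠ 0 := fun h => hv0 (Subtype.ext h)
  have hmul : ∀ X : V, ∃ c : ℝ, B X = c • w := by
    intro X
    obtain ⟨c, hc⟩ := hvall ⟨B X, LinearMap.mem_range_self B X⟩
    exact ⟨c, by simpa [hwdef] using congrArg Subtype.val hc.symm⟩
  obtain ⟨u, hu0⟩ : ∃ u, g w u ≠ 0 := by
    by_contra h; push_neg at h; exact hw0 (hgn.1 w h)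
  obtain ⟨X₀, hX₀⟩ : ∃ X₀, B X₀ = w := by
    obtain ⟨X₀, h⟩ := v.2
    exact ⟨X₀, by rw [hwdef, ← h]⟩
  set φ : V →ₗ[ℝ] ℝ := (g w u)⁻¹ • ((g u).comp B) with hφdef
  have hB : ∀ X, B X = φ X • w := by
    intro X
    obtain ⟨c, hc⟩ := hmul X
    have hφX : φ X = c := by
      simp only [hφdef, LinearMap.smul_apply, LinearMap.coe_comp, Function.comp_apply, hc,
        map_smul, smul_eq_mul]
      rw [hgs u w]
      field_simp
    rw [hφX, hc]
  have hφX₀ : φ X₀ = 1 := by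
    have h1 := hB X₀
    rw [hX₀] at h1
    have h2 : (φ X₀ - 1) • w = 0 := by rw [sub_smul, one_smul, ← h1, sub_self]
    rcases smul_eq_zero.mp h2 with h | h
    · linarith [sub_eq_zero.mp h]
    · exact absurd h hw0
  have haB : ∀ X, a X = φ X • w + α • X := by
    intro X
    have h1 : B X = a X - α • X := by simp [hBdef]
    rw [hB X] at h1
    rw [h1]; abel
  have hsym : ∀ X Y, φ X * g w Y = φ Y * g w X := by
    intro X Y
    have h1 : g (B X) Y = g (B Y) X := by
      simp only [hBdef, LinearMap.sub_apply, LinearMap.smul_apply, LinearMap.id_apply,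
        map_sub, map_smul, LinearMap.sub_apply, LinearMap.smul_apply, smul_eq_mul]
      rw [ha X Y, hgs X Y]
    rw [hB X, hB Y] at h1
    simpa [smul_eq_mul] using h1
  set lam : ℝ := g w X₀ with hlam
  have hgw : ∀ Y, g w Y = lam * φ Y := by
    intro Y
    have h1 := hsym X₀ Y
    rw [hφX₀, one_mul] at h1
    rw [h1, hlam, mul_comm]
  have ga : ∀ X Y, g (a X) Y = α * g X Y + lam * (φ X * φ Y) := by
    intro X Y
    rw [haB X]
    simp only [map_add, map_smul, LinearMap.add_apply, LinearMap.smul_apply, smul_eq_mul]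
    rw [hgw Y]; ring
  set μ : ℝ := φ w with hμ
  have hφa : ∀ X, φ (a X) = (μ + α) * φ X := by
    intro X
    rw [haB X]
    simp only [map_add, map_smul, smul_eq_mul, ← hμ]; ring
  have gaa : ∀ X Y, g (a (a X)) Y = α^2 * g X Y + lam * (2*α + μ) * (φ X * φ Y) := by
    intro X Y
    rw [ga (a X) Y, ga X Y, hφa X]; ring
  -- B as a rank-one map, and its trace
  have hBrank : B = dualTensorHom ℝ V V (φ ⊗ₜ w) := by
    ext X; rw [hB X, dualTensorHom_apply]
  have htrB : LinearMap.trace ℝ V B = μ := by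
    rw [hBrank, LinearMap.trace_eq_contract_apply, contractLeft_apply, hμ]
  have haeq : a = B + α • LinearMap.id := by rw [hBdef]; abel
  set n : ℝ := (finrank ℝ V : ℝ) with hn'
  have htra : LinearMap.trace ℝ V a = μ + α * n := by
    rw [haeq, map_add, map_smul, htrB, LinearMap.trace_id, smul_eq_mul, hn']
  have haa : a ∘ₗ a = (2*α + μ) • B + (α^2) • LinearMap.id := by
    ext X
    rw [LinearMap.comp_apply, haB (a X), hφa X, haB X]
    simp only [LinearMap.add_apply, LinearMap.smul_apply, LinearMap.id_apply, hB X]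
    module
  have htraa : LinearMap.trace ℝ V (a ∘ₗ a) = (2*α + μ) * μ + α^2 * n := by
    rw [haa, map_add, map_smul, map_smul, htrB, LinearMap.trace_id, smul_eq_mul, smul_eq_mul,
      hn']
  have hn4 : (4 : ℝ) ≤ n := by rw [hn']; exact_mod_cast hn
  have hne : 2 * (n - 1) ≠ 0 := by intro h; nlinarith
  have hne1 : n - 1 ≠ 0 := by intro h; nlinarith
  simp only [KN, ga, gaa, hφa, htra, htraa]
  field_simp
  ring
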